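/- Let a ≠ 0, δ = (4ω₂−ω₁)/(2a), let N_KdV5 be the 4×4 matrix-valued map on ℝ⁴ with rows (2x−δ, y, 0, p_y), (y, 0, −p_y, 0), (0, 0, 2x−δ, y), (0, 0, y, 0), set N* := (N_KdV5)ᵀ, and let ∇f denote the column vector (∂f/∂p_x, ∂f/∂p_y, ∂f/∂x, ∂f/∂y). Then at every point with y ≠ 0: N*·∇H_KdV5 = (2x−δ)·∇H_KdV5 + (1/(4a))·∇K_KdV5 and N*·∇K_KdV5 = 4a·y²·∇H_KdV5. Hence the control matrix of the KdV₅ system is M = [[2x−δ, 1/(4a)], [4a·y², 0]]. -/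

import Mathlib

open Matrix

set_option maxHeartbeats 1000000

/-- Partial derivative `∂f/∂z^l` at `z`, coordinates `z = (p_x, p_y, x, y)`. -/
noncomputable def pd (l : Fin 4) (f : (Fin 4 → ℝ) → ℝ) (z : Fin 4 → ℝ) : ℝ :=
  fderiv ℝ f z (Pi.single l 1)

/-- Gradient column vector `(∂f/∂p_x, ∂f/∂p_y, ∂f/∂x, ∂f/∂y)`. -/
noncomputable def grad (f : (Fin 4 → ℝ) → ℝ) (z : Fin 4 → ℝ) : Fin 4 → ℝ :=
  fun i => pd i f z

/-- The KdV₅ recursion operator, with `δ = (4ω₂−ω₁)/(2a)`. -/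
noncomputable def NKdV5 (a ω₁ ω₂ : ℝ) (z : Fin 4 → ℝ) : Matrix (Fin 4) (Fin 4) ℝ :=
  let δ := (4*ω₂ - ω₁)/(2*a)
  let py := z 1; let x := z 2; let y := z 3
  !![2*x - δ, y, 0, py;
     y, 0, -py, 0;
     0, 0, 2*x - δ, y;
     0, 0, y, 0]

/-- The KdV₅ Hamiltonian, as a function of `z = (p_x, p_y, x, y)`. -/
noncomputable def HKdV5 (a ω₁ ω₂ μ : ℝ) (z : Fin 4 → ℝ) : ℝ :=
  let px := z 0; let py := z 1; let x := z 2; let y := z 3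
  (1/2)*(px^2 + py^2) + (1/2)*(ω₁*x^2 + ω₂*y^2) + a*x*y^2 + 2*a*x^3 + μ/(2*y^2)

/-- The KdV₅ second integral, as a function of `z = (p_x, p_y, x, y)`. -/
noncomputable def KKdV5 (a ω₁ ω₂ μ : ℝ) (z : Fin 4 → ℝ) : ℝ :=
  let px := z 0; let py := z 1; let x := z 2; let y := z 3
  4*a*y*px*py + (4*ω₂ - ω₁ - 4*a*x)*(py^2 + μ/y^2)
    + a^2*y^4 + 4*a^2*x^2*y^2 + 4*a*ω₂*x*y^2 + ω₂*(4*ω₂ - ω₁)*y^2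

noncomputable def Pj (i : Fin 4) : (Fin 4 → ℝ) →L[ℝ] ℝ :=
  ContinuousLinearMap.proj (R := ℝ) (φ := fun _ : Fin 4 => ℝ) i

lemma gradH_eq (a ω₁ ω₂ μ : ℝ) (z : Fin 4 → ℝ) (hy : z 3 ≠ 0) :
    grad (HKdV5 a ω₁ ω₂ μ) z =
      ![z 0, z 1, ω₁*z 2 + a*(z 3)^2 + 6*a*(z 2)^2,
        ω₂*z 3 + 2*a*(z 2)*(z 3) - μ/(z 3)^3] := by
  have h0 : HasFDerivAt (fun z : Fin 4 → ℝ => z 0) (Pj 0) z := (Pj 0).hasFDerivAt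
  have h1 : HasFDerivAt (fun z : Fin 4 → ℝ => z 1) (Pj 1) z := (Pj 1).hasFDerivAt
  have h2 : HasFDerivAt (fun z : Fin 4 → ℝ => z 2) (Pj 2) z := (Pj 2).hasFDerivAt
  have h3 : HasFDerivAt (fun z : Fin 4 → ℝ => z 3) (Pj 3) z := (Pj 3).hasFDerivAt
  have hden : (2*((z 3)*(z 3))) ≠ 0 := by simp [hy]
  have hH : HasFDerivAt (fun z : Fin 4 → ℝ =>
      (1/2)*((z 0)*(z 0) + (z 1)*(z 1)) + (1/2)*(ω₁*((z 2)*(z 2)) + ω₂*((z 3)*(z 3)))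
        + a*(z 2)*((z 3)*(z 3)) + 2*a*((z 2)*(z 2)*(z 2))
        + μ*(2*((z 3)*(z 3)))⁻¹) _ z :=
    ((((((h0.mul h0).add (h1.mul h1)).const_mul (1/2)).add
      ((((h2.mul h2).const_mul ω₁).add ((h3.mul h3).const_mul ω₂)).const_mul (1/2))).add
      (((h2.const_mul a).mul (h3.mul h3)))).add
      (((h2.mul h2).mul h2).const_mul (2*a))).add
      (((hasFDerivAt_inv hden).comp z ((h3.mul h3).const_mul 2)).const_mul μ)
  have heq : HKdV5 a ω₁ ω₂ μ = fun z : Fin 4 → ℝ =>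
      (1/2)*((z 0)*(z 0) + (z 1)*(z 1)) + (1/2)*(ω₁*((z 2)*(z 2)) + ω₂*((z 3)*(z 3)))
        + a*(z 2)*((z 3)*(z 3)) + 2*a*((z 2)*(z 2)*(z 2))
        + μ*(2*((z 3)*(z 3)))⁻¹ := by
    funext w; simp only [HKdV5]; rw [div_eq_mul_inv]; ring_nf
  have e (j i : Fin 4) : (Pj j) (Pi.single i (1:ℝ)) = if j = i then 1 else 0 := by
    show Pi.single (M := fun _ : Fin 4 => ℝ) i 1 j = _
    simp [Pi.single_apply]
  funext i
  simp only [grad, pd, heq, hH.fderiv]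
  fin_cases i <;>
    simp [e] <;> (try field_simp) <;> ring

lemma gradK_eq (a ω₁ ω₂ μ : ℝ) (z : Fin 4 → ℝ) (hy : z 3 ≠ 0) :
    grad (KKdV5 a ω₁ ω₂ μ) z =
      ![4*a*(z 3)*(z 1),
        4*a*(z 3)*(z 0) + 2*(4*ω₂ - ω₁ - 4*a*(z 2))*(z 1),
        -4*a*((z 1)^2 + μ/(z 3)^2) + 8*a^2*(z 2)*(z 3)^2 + 4*a*ω₂*(z 3)^2,
        4*a*(z 0)*(z 1) - 2*(4*ω₂ - ω₁ - 4*a*(z 2))*μ/(z 3)^3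
          + 4*a^2*(z 3)^3 + 8*a^2*(z 2)^2*(z 3) + 8*a*ω₂*(z 2)*(z 3)
          + 2*ω₂*(4*ω₂ - ω₁)*(z 3)] := by
  have h0 : HasFDerivAt (fun z : Fin 4 → ℝ => z 0) (Pj 0) z := (Pj 0).hasFDerivAt
  have h1 : HasFDerivAt (fun z : Fin 4 → ℝ => z 1) (Pj 1) z := (Pj 1).hasFDerivAt
  have h2 : HasFDerivAt (fun z : Fin 4 → ℝ => z 2) (Pj 2) z := (Pj 2).hasFDerivAt
  have h3 : HasFDerivAt (fun z : Fin 4 → ℝ => z 3) (Pj 3) z := (Pj 3).hasFDerivAt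
  have hden : ((z 3)*(z 3)) ≠ 0 := mul_ne_zero hy hy
  have hlin : HasFDerivAt (fun z : Fin 4 → ℝ => 4*ω₂ - ω₁ - 4*a*(z 2)) _ z :=
    (hasFDerivAt_const (4*ω₂ - ω₁) z).sub (h2.const_mul (4*a))
  have hKK : HasFDerivAt (fun z : Fin 4 → ℝ =>
      ((4*a)*(z 3))*((z 0)*(z 1))
        + (4*ω₂ - ω₁ - 4*a*(z 2))*((z 1)*(z 1))
        + (μ*(4*ω₂ - ω₁ - 4*a*(z 2)))*((z 3)*(z 3))⁻¹
        + (a^2)*((z 3)*(z 3)*((z 3)*(z 3)))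
        + (4*a^2)*((z 2)*(z 2)*((z 3)*(z 3)))
        + (4*a*ω₂)*((z 2)*((z 3)*(z 3)))
        + (ω₂*(4*ω₂ - ω₁))*((z 3)*(z 3))) _ z :=
    (((((((h3.const_mul (4*a)).mul (h0.mul h1)).add
      (hlin.mul (h1.mul h1))).add
      ((hlin.const_mul μ).mul ((hasFDerivAt_inv hden).comp z (h3.mul h3)))).add
      (((h3.mul h3).mul (h3.mul h3)).const_mul (a^2))).add
      (((h2.mul h2).mul (h3.mul h3)).const_mul (4*a^2))).add
      ((h2.mul (h3.mul h3)).const_mul (4*a*ω₂))).add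
      ((h3.mul h3).const_mul (ω₂*(4*ω₂ - ω₁)))
  have heq : KKdV5 a ω₁ ω₂ μ = fun z : Fin 4 → ℝ =>
      ((4*a)*(z 3))*((z 0)*(z 1))
        + (4*ω₂ - ω₁ - 4*a*(z 2))*((z 1)*(z 1))
        + (μ*(4*ω₂ - ω₁ - 4*a*(z 2)))*((z 3)*(z 3))⁻¹
        + (a^2)*((z 3)*(z 3)*((z 3)*(z 3)))
        + (4*a^2)*((z 2)*(z 2)*((z 3)*(z 3)))
        + (4*a*ω₂)*((z 2)*((z 3)*(z 3)))
        + (ω₂*(4*ω₂ - ω₁))*((z 3)*(z 3)) := by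
    funext w; simp only [KKdV5]; rw [div_eq_mul_inv]; ring_nf
  have e (j i : Fin 4) : (Pj j) (Pi.single i (1:ℝ)) = if j = i then 1 else 0 := by
    show Pi.single (M := fun _ : Fin 4 => ℝ) i 1 j = _
    simp [Pi.single_apply]
  funext i
  simp only [grad, pd, heq, hKK.fderiv]
  fin_cases i <;>
    simp [e] <;> (try field_simp) <;> ring

/-- with `N* = (N_KdV5)ᵀ`, at every point with `y ≠ 0` one has
`N*·∇H = (2x−δ)·∇H + (1/(4a))·∇K` and `N*·∇K = 4ay²·∇H`; hence the control matrix
of the KdV₅ system is `[[2x−δ, 1/(4a)], [4ay², 0]]`. -/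
theorem NKdV5_control_matrix (a ω₁ ω₂ μ : ℝ) (ha : a ≠ 0) (z : Fin 4 → ℝ) (hy : z 3 ≠ 0) :
    (NKdV5 a ω₁ ω₂ z)ᵀ.mulVec (grad (HKdV5 a ω₁ ω₂ μ) z)
        = (2*(z 2) - (4*ω₂ - ω₁)/(2*a)) • grad (HKdV5 a ω₁ ω₂ μ) z
          + (1/(4*a)) • grad (KKdV5 a ω₁ ω₂ μ) z
    ∧ (NKdV5 a ω₁ ω₂ z)ᵀ.mulVec (grad (KKdV5 a ω₁ ω₂ μ) z)
        = (4*a*(z 3)^2) • grad (HKdV5 a ω₁ ω₂ μ) z := by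
  rw [gradH_eq a ω₁ ω₂ μ z hy, gradK_eq a ω₁ ω₂ μ z hy]
  constructor <;> funext i <;> fin_cases i <;>
    (try simp [NKdV5, mulVec, dotProduct, Fin.sum_univ_four, vecHead, vecTail]) <;>
    (try field_simp) <;> ring
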